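/- Let a₊, a₋ > 0 and γ ∈ ℝ \ {-1} with γ > 1 or γ ≤ -3. Then lim_{ρ → a₋/a₊} I₁(ρ)/I₂(ρ) = (a₋/a₊)^{-(γ-1)/(2(γ+1)) + 1}, and consequently lim_{ρ → a₋/a₊} F₂(ρ) = a₋/a₊, where F₂(ρ) = ρ^{(γ-1)/(2(γ+1))} I₁(ρ)/I₂(ρ). -/

import Mathlib

open Set MeasureTheory intervalIntegral Filter Topology

lemma myII (c d a b : ℝ) (hc : c ≠ 0) :
    IntervalIntegrable (fun x => (c*x+d) ^ (-(1:ℝ)/2)) volume a b := by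
  have h := (((intervalIntegrable_rpow' (a := c*a+d) (b := c*b+d)
      (by norm_num : (-1:ℝ) < -1/2)).comp_add_right d).comp_mul_left (c := c))
  have ea : (c*a+d-d)/c = a := by field_simp; ring
  have eb : (c*b+d-d)/c = b := by field_simp; ring
  rwa [ea, eb] at h

lemma key_int_right (b A B : ℝ) (hb : 0 < b) (hAB : A ≤ B) :
    (∫ ξ in A..B, (b*(B-ξ)) ^ (-(1:ℝ)/2)) = 2 * Real.sqrt ((B-A)/b) := by
  have h1 : (∫ ξ in A..B, (b*(B-ξ)) ^ (-(1:ℝ)/2))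
      = ∫ ξ in A..B, ((-b)*ξ + b*B) ^ (-(1:ℝ)/2) := by
    apply intervalIntegral.integral_congr
    intro x _
    ring_nf
  rw [h1, intervalIntegral.integral_comp_mul_add (fun x => x ^ (-(1:ℝ)/2))
    (neg_ne_zero.mpr hb.ne') (b*B)]
  have e1 : (-b)*B + b*B = 0 := by ring
  have e2 : (-b)*A + b*B = b*(B-A) := by ring
  rw [e1, e2, intervalIntegral.integral_symm, integral_rpow (by norm_num)]
  have hgap : (0:ℝ) ≤ b*(B-A) := by nlinarith
  rw [show (-(1:ℝ)/2 + 1) = 1/2 by norm_num, Real.zero_rpow (by norm_num),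
    ← Real.sqrt_eq_rpow, smul_eq_mul,
    show (B-A)/b = b*(B-A)/b^2 from by field_simp,
    Real.sqrt_div hgap, Real.sqrt_sq hb.le]
  field_simp
  ring

lemma key_int_left (b A B : ℝ) (hb : 0 < b) (hAB : A ≤ B) :
    (∫ ξ in A..B, (b*(ξ-A)) ^ (-(1:ℝ)/2)) = 2 * Real.sqrt ((B-A)/b) := by
  have h1 : (∫ ξ in A..B, (b*(ξ-A)) ^ (-(1:ℝ)/2))
      = ∫ ξ in A..B, (b*ξ + (-(b*A))) ^ (-(1:ℝ)/2) := by
    apply intervalIntegral.integral_congr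
    intro x _
    ring_nf
  rw [h1, intervalIntegral.integral_comp_mul_add (fun x => x ^ (-(1:ℝ)/2))
    hb.ne' (-(b*A))]
  have e1 : b*A + -(b*A) = 0 := by ring
  have e2 : b*B + -(b*A) = b*(B-A) := by ring
  rw [e1, e2, integral_rpow (by norm_num)]
  have hgap : (0:ℝ) ≤ b*(B-A) := by nlinarith
  rw [show (-(1:ℝ)/2 + 1) = 1/2 by norm_num, Real.zero_rpow (by norm_num),
    ← Real.sqrt_eq_rpow, smul_eq_mul,
    show (B-A)/b = b*(B-A)/b^2 from by field_simp,
    Real.sqrt_div hgap, Real.sqrt_sq hb.le]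
  field_simp
  ring

lemma sandwich_right (b α A B : ℝ) (hb : 0 < b) (hA : 0 < A) (hAB : A ≤ B) (hα : α ≤ 0) :
    B ^ α * (2 * Real.sqrt ((B-A)/b)) ≤ (∫ ξ in A..B, (b*(B-ξ)) ^ (-(1:ℝ)/2) * ξ ^ α)
    ∧ (∫ ξ in A..B, (b*(B-ξ)) ^ (-(1:ℝ)/2) * ξ ^ α) ≤ A ^ α * (2 * Real.sqrt ((B-A)/b)) := by
  have hfI : IntervalIntegrable (fun ξ => (b*(B-ξ)) ^ (-(1:ℝ)/2)) volume A B := by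
    have := myII (-b) (b*B) A B (neg_ne_zero.mpr hb.ne')
    apply this.congr
    intro x _
    ring_nf
  have hcont : ContinuousOn (fun ξ : ℝ => ξ ^ α) (Set.uIcc A B) := by
    apply ContinuousOn.rpow_const continuousOn_id
    intro x hx
    left
    rw [Set.uIcc_of_le hAB] at hx
    exact (lt_of_lt_of_le hA hx.1).ne'
  have hprod : IntervalIntegrable (fun ξ => (b*(B-ξ)) ^ (-(1:ℝ)/2) * ξ ^ α) volume A B :=
    hfI.mul_continuousOn hcont
  have hfnonneg : ∀ x ∈ Icc A B, 0 ≤ (b*(B-x)) ^ (-(1:ℝ)/2) := fun x hx =>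
    Real.rpow_nonneg (by nlinarith [hx.2]) _
  constructor
  · rw [← key_int_right b A B hb hAB, ← intervalIntegral.integral_const_mul]
    apply intervalIntegral.integral_mono_on hAB (hfI.const_mul _) hprod
    intro x hx
    rw [mul_comm]
    exact mul_le_mul_of_nonneg_left
      (Real.rpow_le_rpow_of_nonpos (lt_of_lt_of_le hA hx.1) hx.2 hα) (hfnonneg x hx)
  · rw [← key_int_right b A B hb hAB, ← intervalIntegral.integral_const_mul]
    apply intervalIntegral.integral_mono_on hAB hprod (hfI.const_mul _)
    intro x hx
    rw [mul_comm (A ^ α)]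
    exact mul_le_mul_of_nonneg_left
      (Real.rpow_le_rpow_of_nonpos hA hx.1 hα) (hfnonneg x hx)

lemma sandwich_left (b α A B : ℝ) (hb : 0 < b) (hA : 0 < A) (hAB : A ≤ B) (hα : α ≤ 0) :
    B ^ α * (2 * Real.sqrt ((B-A)/b)) ≤ (∫ ξ in A..B, (b*(ξ-A)) ^ (-(1:ℝ)/2) * ξ ^ α)
    ∧ (∫ ξ in A..B, (b*(ξ-A)) ^ (-(1:ℝ)/2) * ξ ^ α) ≤ A ^ α * (2 * Real.sqrt ((B-A)/b)) := by
  have hfI : IntervalIntegrable (fun ξ => (b*(ξ-A)) ^ (-(1:ℝ)/2)) volume A B := by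
    have := myII b (-(b*A)) A B hb.ne'
    apply this.congr
    intro x _
    ring_nf
  have hcont : ContinuousOn (fun ξ : ℝ => ξ ^ α) (Set.uIcc A B) := by
    apply ContinuousOn.rpow_const continuousOn_id
    intro x hx
    left
    rw [Set.uIcc_of_le hAB] at hx
    exact (lt_of_lt_of_le hA hx.1).ne'
  have hprod : IntervalIntegrable (fun ξ => (b*(ξ-A)) ^ (-(1:ℝ)/2) * ξ ^ α) volume A B :=
    hfI.mul_continuousOn hcont
  have hfnonneg : ∀ x ∈ Icc A B, 0 ≤ (b*(x-A)) ^ (-(1:ℝ)/2) := fun x hx =>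
    Real.rpow_nonneg (by nlinarith [hx.1]) _
  constructor
  · rw [← key_int_left b A B hb hAB, ← intervalIntegral.integral_const_mul]
    apply intervalIntegral.integral_mono_on hAB (hfI.const_mul _) hprod
    intro x hx
    rw [mul_comm]
    exact mul_le_mul_of_nonneg_left
      (Real.rpow_le_rpow_of_nonpos (lt_of_lt_of_le hA hx.1) hx.2 hα) (hfnonneg x hx)
  · rw [← key_int_left b A B hb hAB, ← intervalIntegral.integral_const_mul]
    apply intervalIntegral.integral_mono_on hAB hprod (hfI.const_mul _)
    intro x hx
    rw [mul_comm (A ^ α)]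
    exact mul_le_mul_of_nonneg_left
      (Real.rpow_le_rpow_of_nonpos hA hx.1 hα) (hfnonneg x hx)

lemma tendsto_g2 (ap am α : ℝ) (hap : 0 < ap) (ham : 0 < am) :
    Filter.Tendsto (fun ρ : ℝ => (ap*(ρ+1)/(ap+am)) ^ α * ((am/ap) * Real.sqrt ρ)
        / (ap/(ap+am)*((ρ+1)/ρ)) ^ α) (𝓝 (am/ap))
      (𝓝 ((am/ap) * Real.sqrt (am/ap) / (ap/am) ^ α)) := by
  have hr : (0:ℝ) < am/ap := by positivity
  have hLv : ap*((am/ap)+1)/(ap+am) = 1 := by field_simp; ring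
  have hUv : ap/(ap+am)*(((am/ap)+1)/(am/ap)) = ap/am := by
    rw [div_add' _ _ _ hap.ne']
    field_simp
    ring
  have hL : ContinuousAt (fun ρ : ℝ => ap*(ρ+1)/(ap+am)) (am/ap) := by fun_prop
  have hU : ContinuousAt (fun ρ : ℝ => ap/(ap+am)*((ρ+1)/ρ)) (am/ap) := by
    exact ContinuousAt.mul continuousAt_const
      (ContinuousAt.div (by fun_prop) continuousAt_id hr.ne')
  have h : ContinuousAt (fun ρ : ℝ => (ap*(ρ+1)/(ap+am)) ^ α * ((am/ap) * Real.sqrt ρ)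
      / (ap/(ap+am)*((ρ+1)/ρ)) ^ α) (am/ap) := by
    apply ContinuousAt.div
    · exact (hL.rpow_const (by rw [hLv]; exact Or.inl one_ne_zero)).mul
        ((Real.continuous_sqrt.continuousAt).const_mul _)
    · exact hU.rpow_const (by rw [hUv]; exact Or.inl (by positivity))
    · rw [hUv]
      exact (Real.rpow_pos_of_pos (by positivity) α).ne'
  have hval : (ap*((am/ap)+1)/(ap+am)) ^ α * ((am/ap) * Real.sqrt (am/ap))
      / (ap/(ap+am)*(((am/ap)+1)/(am/ap))) ^ α = (am/ap) * Real.sqrt (am/ap) / (ap/am) ^ α := by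
    rw [hLv, hUv, Real.one_rpow, one_mul]
  exact hval ▸ h.tendsto

lemma tendsto_g1 (ap am α : ℝ) (hap : 0 < ap) (ham : 0 < am) :
    Filter.Tendsto (fun ρ : ℝ => (am/ap) * Real.sqrt ρ / (ap/am) ^ α) (𝓝 (am/ap))
      (𝓝 ((am/ap) * Real.sqrt (am/ap) / (ap/am) ^ α)) := by
  exact ((Real.continuous_sqrt.continuousAt.const_mul _).div_const _)

lemma Tval (ap am γ : ℝ) (hap : 0 < ap) (ham : 0 < am) (hγ1 : γ + 1 ≠ 0) :
    (am/ap) * Real.sqrt (am/ap) / (ap/am) ^ (-(γ/(γ+1)))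
      = (am/ap) ^ (-((γ-1)/(2*(γ+1)))+1) := by
  have hr : (0:ℝ) < am/ap := by positivity
  have he : -((γ-1)/(2*(γ+1)))+1 = 1+(1/2-γ/(γ+1)) := by field_simp; ring
  rw [he, Real.rpow_add hr, Real.rpow_one, Real.rpow_sub hr, ← Real.sqrt_eq_rpow,
    show ap/am = (am/ap)⁻¹ from by rw [inv_div],
    Real.inv_rpow hr.le, ← Real.rpow_neg hr.le, neg_neg, mul_div_assoc]

set_option maxHeartbeats 1000000 in
/-- as `ρ → a₋/a₊` (from inside the interval of definition),
`I₁(ρ)/I₂(ρ) → (a₋/a₊)^{-(γ-1)/(2(γ+1))+1}` and hence `F₂(ρ) → a₋/a₊`. -/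
theorem stmt_5 (ap am γ : ℝ) (hap : 0 < ap) (ham : 0 < am)
    (hγ : 1 < γ ∨ γ ≤ -3)
    (I₁ I₂ F₂ : ℝ → ℝ)
    (hI₁ : ∀ ρ : ℝ, I₁ ρ =
      ∫ ξ in (ap * (ρ + 1) / (ap + am))..1,
        |ap - ap * ξ| ^ (-(1 : ℝ) / 2) * |ξ| ^ (-(γ / (γ + 1))))
    (hI₂ : ∀ ρ : ℝ, I₂ ρ =
      ∫ ξ in (ap / am)..(ap / (ap + am) * ((ρ + 1) / ρ)),
        |am * ξ - ap| ^ (-(1 : ℝ) / 2) * |ξ| ^ (-(γ / (γ + 1))))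
    (hF₂ : ∀ ρ : ℝ, F₂ ρ = ρ ^ ((γ - 1) / (2 * (γ + 1))) * (I₁ ρ / I₂ ρ)) :
    Tendsto (fun ρ : ℝ => I₁ ρ / I₂ ρ)
        (𝓝[if 1 < γ then Iio (am / ap) else Ioi (am / ap)] (am / ap))
        (𝓝 ((am / ap) ^ (-((γ - 1) / (2 * (γ + 1))) + 1))) ∧
      Tendsto F₂
        (𝓝[if 1 < γ then Iio (am / ap) else Ioi (am / ap)] (am / ap))
        (𝓝 (am / ap)) := by
  have hγ1 : γ + 1 ≠ 0 := by rcases hγ with h | h <;> intro hc <;> linarith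
  set α := -(γ / (γ + 1)) with hαdef
  have hα : α ≤ 0 := by
    have : 0 ≤ γ / (γ + 1) := by
      rcases hγ with h | h
      · exact div_nonneg (by linarith) (by linarith)
      · exact div_nonneg_iff.mpr (Or.inr ⟨by linarith, by linarith⟩)
    simp only [hαdef]; linarith
  have hr₀ : (0:ℝ) < am / ap := by positivity
  have hTT : (am/ap) * Real.sqrt (am/ap) / (ap/am) ^ α
      = (am/ap) ^ (-((γ-1)/(2*(γ+1)))+1) := Tval ap am γ hap ham hγ1
  have hmain : Tendsto (fun ρ : ℝ => I₁ ρ / I₂ ρ)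
      (𝓝[if 1 < γ then Iio (am/ap) else Ioi (am/ap)] (am/ap))
      (𝓝 ((am/ap) ^ (-((γ-1)/(2*(γ+1)))+1))) := by
    rw [← hTT]
    rcases hγ with hcase | hcase
    · rw [if_pos hcase]
      have hbnd : ∀ᶠ ρ in 𝓝[Iio (am/ap)] (am/ap),
          (am/ap) * Real.sqrt ρ / (ap/am) ^ α ≤ I₁ ρ / I₂ ρ ∧
          I₁ ρ / I₂ ρ ≤ (ap*(ρ+1)/(ap+am)) ^ α * ((am/ap) * Real.sqrt ρ)
            / (ap/(ap+am)*((ρ+1)/ρ)) ^ α := by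
        filter_upwards [eventually_mem_nhdsWithin,
          (eventually_gt_nhds hr₀).filter_mono nhdsWithin_le_nhds] with ρ h1 h2
        have hρ0 : 0 < ρ := h2
        have hρap : ρ * ap < am := (lt_div_iff₀ hap).mp h1
        have hρ1 : (0:ℝ) < ρ + 1 := by linarith
        set L := ap*(ρ+1)/(ap+am) with hLdef
        set U := ap/(ap+am)*((ρ+1)/ρ) with hUdef
        have hL0 : 0 < L := by positivity
        have hL1 : L ≤ 1 := by rw [div_le_one (by positivity)]; nlinarith
        have hU0 : 0 < U := by positivity
        have hUps : U - ap/am = ap*(am-ρ*ap)/(ρ*am*(ap+am)) := by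
          rw [hUdef]; field_simp [hρ0.ne']; ring
        have hpU : ap/am < U := by
          have h3 : 0 < am - ρ*ap := by linarith
          have h4 : 0 < ap*(am-ρ*ap)/(ρ*am*(ap+am)) := by positivity
          linarith [hUps ▸ h4]
        have hI1eq : I₁ ρ = ∫ ξ in L..1, (ap*(1-ξ)) ^ (-(1:ℝ)/2) * ξ ^ α := by
          rw [hI₁ ρ]
          apply intervalIntegral.integral_congr
          intro x hx
          rw [Set.uIcc_of_le hL1] at hx
          show |ap - ap*x| ^ (-(1:ℝ)/2) * |x| ^ α = (ap*(1-x)) ^ (-(1:ℝ)/2) * x ^ α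
          rw [abs_of_nonneg (by nlinarith [hx.2] : (0:ℝ) ≤ ap - ap*x),
            abs_of_pos (lt_of_lt_of_le hL0 hx.1),
            show ap - ap*x = ap*(1-x) from by ring]
        have hs₁ := sandwich_right ap α L 1 hap hL0 hL1 hα
        rw [← hI1eq] at hs₁
        have hI2eq : I₂ ρ = ∫ ξ in (ap/am)..U, (am*(ξ-ap/am)) ^ (-(1:ℝ)/2) * ξ ^ α := by
          rw [hI₂ ρ]
          apply intervalIntegral.integral_congr
          intro x hx
          rw [Set.uIcc_of_le hpU.le] at hx
          show |am*x - ap| ^ (-(1:ℝ)/2) * |x| ^ α = (am*(x-ap/am)) ^ (-(1:ℝ)/2) * x ^ α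
          rw [abs_of_nonneg (by nlinarith [hx.1, (div_le_iff₀ ham).mp hx.1] :
              (0:ℝ) ≤ am*x - ap),
            abs_of_pos (lt_of_lt_of_le (by positivity) hx.1),
            show am*x - ap = am*(x - ap/am) from by rw [mul_sub, mul_div_cancel₀ _ ham.ne']; try ring]
        have hs₂ := sandwich_left am α (ap/am) U ham (by positivity) hpU.le hα
        rw [← hI2eq] at hs₂
        have hXrel : (1-L)/ap = ((am/ap)^2*ρ) * ((U-ap/am)/am) := by
          rw [hLdef, hUdef]; field_simp [hρ0.ne']; ring
        have hsq : Real.sqrt ((1-L)/ap)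
            = (am/ap) * Real.sqrt ρ * Real.sqrt ((U-ap/am)/am) := by
          rw [hXrel, Real.sqrt_mul (by positivity), Real.sqrt_mul (sq_nonneg _),
            Real.sqrt_sq (by positivity)]
        have hX2pos : 0 < (U-ap/am)/am := div_pos (sub_pos.mpr hpU) ham
        have hsq2pos : 0 < Real.sqrt ((U-ap/am)/am) := Real.sqrt_pos.mpr hX2pos
        have hpα : (0:ℝ) < (ap/am) ^ α := Real.rpow_pos_of_pos (by positivity) α
        have hUα : (0:ℝ) < U ^ α := Real.rpow_pos_of_pos hU0 α
        have hI2pos : 0 < I₂ ρ :=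
          lt_of_lt_of_le (mul_pos hUα (by linarith)) hs₂.1
        have hI1nonneg : 0 ≤ I₁ ρ := le_trans (by positivity) hs₁.1
        constructor
        · have heq : (am/ap) * Real.sqrt ρ / (ap/am) ^ α
              = (1:ℝ) ^ α * (2 * Real.sqrt ((1-L)/ap))
                / ((ap/am) ^ α * (2 * Real.sqrt ((U-ap/am)/am))) := by
            rw [Real.one_rpow, one_mul, hsq,
              div_eq_div_iff hpα.ne' (mul_pos hpα (by linarith)).ne']
            ring
          rw [heq]
          exact div_le_div₀ hI1nonneg hs₁.1 hI2pos hs₂.2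
        · have heq : L ^ α * ((am/ap) * Real.sqrt ρ) / U ^ α
              = L ^ α * (2 * Real.sqrt ((1-L)/ap))
                / (U ^ α * (2 * Real.sqrt ((U-ap/am)/am))) := by
            rw [hsq, div_eq_div_iff hUα.ne' (mul_pos hUα (by linarith)).ne']
            ring
          rw [heq]
          exact div_le_div₀ (by positivity) hs₁.2 (mul_pos hUα (by linarith)) hs₂.1
      exact tendsto_of_tendsto_of_tendsto_of_le_of_le'
        ((tendsto_g1 ap am α hap ham).mono_left nhdsWithin_le_nhds)
        ((tendsto_g2 ap am α hap ham).mono_left nhdsWithin_le_nhds)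
        (hbnd.mono fun ρ h => h.1) (hbnd.mono fun ρ h => h.2)
    · have h1γ : ¬(1 < γ) := by linarith
      rw [if_neg h1γ]
      have hbnd : ∀ᶠ ρ in 𝓝[Ioi (am/ap)] (am/ap),
          (ap*(ρ+1)/(ap+am)) ^ α * ((am/ap) * Real.sqrt ρ)
            / (ap/(ap+am)*((ρ+1)/ρ)) ^ α ≤ I₁ ρ / I₂ ρ ∧
          I₁ ρ / I₂ ρ ≤ (am/ap) * Real.sqrt ρ / (ap/am) ^ α := by
        filter_upwards [eventually_mem_nhdsWithin] with ρ h1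
        have hρr : am/ap < ρ := h1
        have hρ0 : 0 < ρ := lt_trans hr₀ hρr
        have hρap : am < ρ * ap := (div_lt_iff₀ hap).mp hρr
        have hρ1 : (0:ℝ) < ρ + 1 := by linarith
        set L := ap*(ρ+1)/(ap+am) with hLdef
        set U := ap/(ap+am)*((ρ+1)/ρ) with hUdef
        have hL1 : 1 ≤ L := by rw [le_div_iff₀ (by positivity)]; nlinarith
        have hL0 : (0:ℝ) < 1 := one_pos
        have hU0 : 0 < U := by positivity
        have hUps : ap/am - U = ap*(ρ*ap-am)/(ρ*am*(ap+am)) := by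
          rw [hUdef]; field_simp [hρ0.ne']; ring
        have hpU : U < ap/am := by
          have h3 : 0 < ρ*ap - am := by linarith
          have h4 : 0 < ap*(ρ*ap-am)/(ρ*am*(ap+am)) := by positivity
          linarith [hUps ▸ h4]
        have hI1eq : I₁ ρ = -∫ ξ in (1:ℝ)..L, (ap*(ξ-1)) ^ (-(1:ℝ)/2) * ξ ^ α := by
          rw [hI₁ ρ, intervalIntegral.integral_symm]
          refine neg_inj.mpr (intervalIntegral.integral_congr fun x hx => ?_)
          rw [Set.uIcc_of_le hL1] at hx
          show |ap - ap*x| ^ (-(1:ℝ)/2) * |x| ^ α = (ap*(x-1)) ^ (-(1:ℝ)/2) * x ^ α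
          rw [abs_of_nonpos (by nlinarith [hx.1] : ap - ap*x ≤ 0),
            abs_of_pos (lt_of_lt_of_le one_pos hx.1),
            show -(ap - ap*x) = ap*(x-1) from by ring]
        have hs₁ := sandwich_left ap α 1 L hap one_pos hL1 hα
        have hI2eq : I₂ ρ = -∫ ξ in U..(ap/am), (am*(ap/am-ξ)) ^ (-(1:ℝ)/2) * ξ ^ α := by
          rw [hI₂ ρ, intervalIntegral.integral_symm]
          refine neg_inj.mpr (intervalIntegral.integral_congr fun x hx => ?_)
          rw [Set.uIcc_of_le hpU.le] at hx
          show |am*x - ap| ^ (-(1:ℝ)/2) * |x| ^ α = (am*(ap/am-x)) ^ (-(1:ℝ)/2) * x ^ α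
          rw [abs_of_nonpos (by nlinarith [(le_div_iff₀ ham).mp hx.2] : am*x - ap ≤ 0),
            abs_of_pos (lt_of_lt_of_le hU0 hx.1),
            show -(am*x - ap) = am*(ap/am - x) from by rw [mul_sub, mul_div_cancel₀ _ ham.ne']; try ring]
        have hs₂ := sandwich_right am α U (ap/am) ham hU0 hpU.le hα
        have hXrel : (L-1)/ap = ((am/ap)^2*ρ) * ((ap/am-U)/am) := by
          rw [hLdef, hUdef]; field_simp [hρ0.ne']; ring
        have hsq : Real.sqrt ((L-1)/ap)
            = (am/ap) * Real.sqrt ρ * Real.sqrt ((ap/am-U)/am) := by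
          rw [hXrel, Real.sqrt_mul (by positivity), Real.sqrt_mul (sq_nonneg _),
            Real.sqrt_sq (by positivity)]
        have hX2pos : 0 < (ap/am-U)/am := div_pos (sub_pos.mpr hpU) ham
        have hsq2pos : 0 < Real.sqrt ((ap/am-U)/am) := Real.sqrt_pos.mpr hX2pos
        have hpα : (0:ℝ) < (ap/am) ^ α := Real.rpow_pos_of_pos (by positivity) α
        have hUα : (0:ℝ) < U ^ α := Real.rpow_pos_of_pos hU0 α
        have hJ2pos : 0 < ∫ ξ in U..(ap/am), (am*(ap/am-ξ)) ^ (-(1:ℝ)/2) * ξ ^ α :=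
          lt_of_lt_of_le (mul_pos hpα (by linarith)) hs₂.1
        have hJ1nonneg : 0 ≤ ∫ ξ in (1:ℝ)..L, (ap*(ξ-1)) ^ (-(1:ℝ)/2) * ξ ^ α :=
          le_trans (by positivity) hs₁.1
        have hratio : I₁ ρ / I₂ ρ
            = (∫ ξ in (1:ℝ)..L, (ap*(ξ-1)) ^ (-(1:ℝ)/2) * ξ ^ α)
              / ∫ ξ in U..(ap/am), (am*(ap/am-ξ)) ^ (-(1:ℝ)/2) * ξ ^ α := by
          rw [hI1eq, hI2eq, neg_div_neg_eq]
        rw [hratio]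
        constructor
        · have heq : L ^ α * ((am/ap) * Real.sqrt ρ) / U ^ α
              = L ^ α * (2 * Real.sqrt ((L-1)/ap))
                / (U ^ α * (2 * Real.sqrt ((ap/am-U)/am))) := by
            rw [hsq, div_eq_div_iff hUα.ne' (mul_pos hUα (by linarith)).ne']
            ring
          rw [heq]
          exact div_le_div₀ hJ1nonneg hs₁.1 hJ2pos hs₂.2
        · have heq : (am/ap) * Real.sqrt ρ / (ap/am) ^ α
              = (1:ℝ) ^ α * (2 * Real.sqrt ((L-1)/ap))
                / ((ap/am) ^ α * (2 * Real.sqrt ((ap/am-U)/am))) := by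
            rw [Real.one_rpow, one_mul, hsq,
              div_eq_div_iff hpα.ne' (mul_pos hpα (by linarith)).ne']
            ring
          rw [heq]
          exact div_le_div₀ (by positivity) hs₁.2 (mul_pos hpα (by linarith)) hs₂.1
      exact tendsto_of_tendsto_of_tendsto_of_le_of_le'
        ((tendsto_g2 ap am α hap ham).mono_left nhdsWithin_le_nhds)
        ((tendsto_g1 ap am α hap ham).mono_left nhdsWithin_le_nhds)
        (hbnd.mono fun ρ h => h.1) (hbnd.mono fun ρ h => h.2)
  refine ⟨hmain, ?_⟩
  have hc : Tendsto (fun ρ : ℝ => ρ ^ ((γ-1)/(2*(γ+1))))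
      (𝓝[if 1 < γ then Iio (am/ap) else Ioi (am/ap)] (am/ap))
      (𝓝 ((am/ap) ^ ((γ-1)/(2*(γ+1))))) :=
    (Real.continuousAt_rpow_const _ _ (Or.inl hr₀.ne')).mono_left nhdsWithin_le_nhds
  have h2 := (hc.mul hmain).congr fun ρ => (hF₂ ρ).symm
  rwa [← Real.rpow_add hr₀,
    show (γ-1)/(2*(γ+1)) + (-((γ-1)/(2*(γ+1)))+1) = 1 from by ring,
    Real.rpow_one] at h2
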